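/- For a totally unimodular integer matrix M ∈ Z^{p×q} and any integral vector b ∈ Z^p, every vertex of the polyhedron {x ∈ R^q : Mx ≤ b} is an integer point. -/

import Mathlib

/-- **Hoffman–Kruskal (one direction).** For a totally unimodular integer matrix
`M ∈ ℤ^{p×q}` and any integral vector `b ∈ ℤ^p`, every vertex (extreme point) of the
polyhedron `{x ∈ ℝ^q : M x ≤ b}` is an integer point. -/
theorem vertex_integral_of_totallyUnimodular (p q : ℕ) (M : Matrix (Fin p) (Fin q) ℤ)
    (hM : M.IsTotallyUnimodular) (b : Fin p → ℤ) (x : Fin q → ℝ)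
    (hx : x ∈ Set.extremePoints ℝ
      {u : Fin q → ℝ | ∀ i, ∑ j, (M i j : ℝ) * u j ≤ (b i : ℝ)}) :
    ∀ j, ∃ z : ℤ, x j = z := by
  classical
  obtain ⟨hxP, hext⟩ := hx
  simp only [Set.mem_setOf_eq] at hxP
  set tight : Fin p → Prop := fun i => ∑ j, (M i j : ℝ) * x j = (b i : ℝ) with htight
  -- Key claim: a direction orthogonal to all tight rows must be zero.
  have key : ∀ d : Fin q → ℝ, (∀ i, tight i → ∑ j, (M i j : ℝ) * d j = 0) → d = 0 := by
    intro d hd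
    by_contra hd0
    set F : Finset (Fin p) := Finset.univ.filter (fun i => ∑ j, (M i j : ℝ) * d j ≠ 0) with hF
    have hslack : ∀ i ∈ F, ∑ j, (M i j : ℝ) * x j < (b i : ℝ) := by
      intro i hi
      rcases lt_or_eq_of_le (hxP i) with h | h
      · exact h
      · exact absurd (hd i h) (by simpa [hF] using hi)
    set ε : ℝ := if hFn : F.Nonempty then
        F.inf' hFn (fun i => ((b i : ℝ) - ∑ j, (M i j : ℝ) * x j) / |∑ j, (M i j : ℝ) * d j|)
      else 1 with hε
    have hεpos : 0 < ε := by
      rw [hε]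
      split_ifs with hFn
      · rw [Finset.lt_inf'_iff]
        intro i hi
        apply div_pos (sub_pos.mpr (hslack i hi))
        rw [abs_pos]
        simpa [hF] using hi
      · exact one_pos
    have hεle : ∀ i ∈ F, ε * |∑ j, (M i j : ℝ) * d j| ≤ (b i : ℝ) - ∑ j, (M i j : ℝ) * x j := by
      intro i hi
      have habs : 0 < |∑ j, (M i j : ℝ) * d j| := by
        rw [abs_pos]; simpa [hF] using hi
      have : ε ≤ ((b i : ℝ) - ∑ j, (M i j : ℝ) * x j) / |∑ j, (M i j : ℝ) * d j| := by
        rw [hε]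
        split_ifs with hFn
        · exact Finset.inf'_le _ hi
        · exact absurd ⟨i, hi⟩ hFn
      calc ε * |∑ j, (M i j : ℝ) * d j|
          ≤ (((b i : ℝ) - ∑ j, (M i j : ℝ) * x j) / |∑ j, (M i j : ℝ) * d j|)
              * |∑ j, (M i j : ℝ) * d j| := by
            exact mul_le_mul_of_nonneg_right this habs.le
        _ = (b i : ℝ) - ∑ j, (M i j : ℝ) * x j := by
            field_simp
    have hmem : ∀ s : ℝ, |s| ≤ ε →
        (x + s • d) ∈ {u : Fin q → ℝ | ∀ i, ∑ j, (M i j : ℝ) * u j ≤ (b i : ℝ)} := by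
      intro s hs i
      have hexp : ∑ j, (M i j : ℝ) * (x j + s * d j)
          = (∑ j, (M i j : ℝ) * x j) + s * ∑ j, (M i j : ℝ) * d j := by
        rw [Finset.mul_sum]
        rw [← Finset.sum_add_distrib]
        congr 1; funext j; ring
      simp only [Set.mem_setOf_eq, Pi.add_apply, Pi.smul_apply, smul_eq_mul]
      rw [hexp]
      by_cases hiF : i ∈ F
      · have h1 : s * ∑ j, (M i j : ℝ) * d j ≤ ε * |∑ j, (M i j : ℝ) * d j| := by
          calc s * ∑ j, (M i j : ℝ) * d j ≤ |s * ∑ j, (M i j : ℝ) * d j| := le_abs_self _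
            _ = |s| * |∑ j, (M i j : ℝ) * d j| := abs_mul _ _
            _ ≤ ε * |∑ j, (M i j : ℝ) * d j| := by
                exact mul_le_mul_of_nonneg_right hs (abs_nonneg _)
        linarith [hεle i hiF]
      · have : ∑ j, (M i j : ℝ) * d j = 0 := by
          by_contra h
          exact hiF (by simpa [hF] using h)
        rw [this]
        simpa using hxP i
    have h1 : (x + ε • d) ∈ _ := hmem ε (by rw [abs_of_pos hεpos])
    have h2 : (x + (-ε) • d) ∈ _ := hmem (-ε) (by rw [abs_neg, abs_of_pos hεpos])
    have hseg : x ∈ openSegment ℝ (x + ε • d) (x + (-ε) • d) := by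
      refine ⟨1/2, 1/2, by norm_num, by norm_num, by norm_num, ?_⟩
      funext j
      simp only [Pi.add_apply, Pi.smul_apply, smul_eq_mul]
      ring
    have := hext h1 h2 hseg
    have hεd : ε • d = 0 := by
      have : x + ε • d = x + 0 := by rw [add_zero]; exact this
      exact add_left_cancel this
    exact hd0 (by simpa [hεpos.ne'] using hεd)
  -- The tight rows (as real vectors) span all of ℝ^q.
  haveI : DecidablePred tight := Classical.decPred _
  set A : Matrix {i // tight i} (Fin q) ℝ := Matrix.of (fun i j => (M i.1 j : ℝ)) with hA
  have hinj : Function.Injective A.mulVecLin := by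
    rw [← LinearMap.ker_eq_bot, LinearMap.ker_eq_bot']
    intro d hdz
    apply key
    intro i hi
    have := congrFun hdz ⟨i, hi⟩
    simpa [hA, Matrix.mulVecLin, Matrix.mulVec, dotProduct] using this
  have hrank : A.rank = q := by
    rw [Matrix.rank, LinearMap.finrank_range_of_inj hinj]
    simp
  have hspan : Submodule.span ℝ (Set.range A) = ⊤ := by
    apply Submodule.eq_top_of_finrank_eq
    change Module.finrank ℝ (Submodule.span ℝ (Set.range A.row)) = _
    rw [← Matrix.rank_eq_finrank_span_row]
    rw [hrank]
    simp
  obtain ⟨s, hsub, hspans, hind⟩ := exists_linearIndependent ℝ (Set.range A)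
  rw [hspan] at hspans
  have hsfin : s.Finite := hind.setFinite
  haveI : Fintype s := hsfin.fintype
  have hbasis : Module.Basis s ℝ (Fin q → ℝ) := Module.Basis.mk hind (by
    rw [Subtype.range_coe, hspans])
  have hcard : Fintype.card s = q := by
    have := Module.finrank_eq_card_basis hbasis
    simp only [Module.finrank_fin_fun] at this
    omega
  have e : Fin q ≃ s := (Fintype.equivFinOfCardEq hcard).symm
  -- choose for each basis vector a tight row index
  have hpick : ∀ v : s, ∃ i : {i // tight i}, A i = (v : Fin q → ℝ) := fun v => hsub v.2
  choose pick hpickspec using hpick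
  set g : Fin q → Fin p := fun k => (pick (e k)).1 with hg
  have hgt : ∀ k, tight (g k) := fun k => (pick (e k)).2
  have hgrow : ∀ k, (fun j => (M (g k) j : ℝ)) = ((e k : s) : Fin q → ℝ) := by
    intro k
    exact hpickspec (e k)
  set B : Matrix (Fin q) (Fin q) ℤ := M.submatrix g id with hB
  set Br : Matrix (Fin q) (Fin q) ℝ := B.map (Int.cast : ℤ → ℝ) with hBr
  have hBrrow : ∀ k, (fun j => Br k j) = ((e k : s) : Fin q → ℝ) := by
    intro k
    simpa [hBr, hB, Matrix.submatrix] using hgrow k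
  -- the rows of Br are linearly independent, so det Br ≠ 0
  have hfamind : LinearIndependent ℝ (fun k : Fin q => ((e k : s) : Fin q → ℝ)) :=
    hind.comp e e.injective
  have hdetBr : Br.det ≠ 0 := by
    intro h0
    have : ∃ v ≠ 0, Matrix.vecMul v Br = 0 := Matrix.exists_vecMul_eq_zero_iff.mpr h0
    obtain ⟨v, hv0, hv⟩ := this
    apply hv0
    funext k
    refine Fintype.linearIndependent_iff.mp hfamind v ?_ k
    funext j
    have := congrFun hv j
    simp only [Matrix.vecMul, dotProduct, Pi.zero_apply] at this
    simp only [Finset.sum_apply, Pi.smul_apply, smul_eq_mul, Pi.zero_apply]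
    rw [← this]
    congr 1
    funext k'
    rw [← congrFun (hBrrow k') j]
  have hdetB : B.det ≠ 0 := by
    intro h
    apply hdetBr
    have h2 := (Int.castRingHom ℝ).map_det B
    rw [h] at h2
    simpa [hBr] using h2.symm
  have hunit : IsUnit B.det := by
    obtain ⟨sg, hsg⟩ := (M.isTotallyUnimodular_iff.mp hM) q g id
    rw [← hB] at hsg
    cases sg with
    | zero => exact absurd hsg.symm (by simpa using hdetB)
    | pos => exact hsg ▸ (by simp)
    | neg => exact hsg ▸ (by simp)
  -- invert over ℤ
  have hNB : B⁻¹ * B = 1 := Matrix.nonsing_inv_mul B hunit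
  have hNBr : (B⁻¹.map (Int.cast : ℤ → ℝ)) * Br = 1 := by
    have h2 : ((B⁻¹ * B).map ⇑(Int.castRingHom ℝ))
        = ((1 : Matrix (Fin q) (Fin q) ℤ).map ⇑(Int.castRingHom ℝ)) := by rw [hNB]
    rw [Matrix.map_mul (f := Int.castRingHom ℝ)] at h2
    rw [Matrix.map_one _ (by simp) (by simp)] at h2
    simpa [hBr] using h2
  have hBx : Br.mulVec x = fun k => (b (g k) : ℝ) := by
    funext k
    have ht := hgt k
    simp only [htight] at ht
    simpa [Matrix.mulVec, dotProduct, hBr, hB] using ht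
  have hxeq : x = (B⁻¹.map (Int.cast : ℤ → ℝ)).mulVec (fun k => (b (g k) : ℝ)) := by
    rw [← hBx, Matrix.mulVec_mulVec, hNBr, Matrix.one_mulVec]
  intro j
  refine ⟨∑ k, B⁻¹ j k * b (g k), ?_⟩
  rw [congrFun hxeq j]
  simp only [Matrix.mulVec, dotProduct, Matrix.map_apply]
  push_cast
  rfl
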